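/- Let A and Ã = A + Δ be symmetric real n×n matrices with eigenvalues λ_1 ≥ ... ≥ λ_n and λ̃_1 ≥ ... ≥ λ̃_n. Fix j with gap := min(λ_{j-1} − λ_j, λ_j − λ_{j+1}) > 0 (with λ_0 = +∞, λ_{n+1} = −∞). Then there exist unit eigenvectors v of A for λ_j and ṽ of Ã for λ̃_j such that ||v − ṽ|| ≤ 2^{3/2} ||A − Ã|| / gap. -/

import Mathlib

open Matrix


open Matrix Finset

noncomputable section

namespace DKaux

variable {n : ℕ}

/-- for an orthogonal matrix, `mulVec` preserves dot products. -/
lemma orth (P : Matrix (Fin n) (Fin n) ℝ) (hP : Pᵀ * P = 1) (a b : Fin n → ℝ) :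
    (P *ᵥ a) ⬝ᵥ (P *ᵥ b) = a ⬝ᵥ b := by
  rw [dotProduct_mulVec, ← mulVec_transpose, mulVec_mulVec, hP, one_mulVec]

lemma inner_eq (x y : Fin n → ℝ) :
    inner ℝ ((WithLp.equiv 2 (Fin n → ℝ)).symm x) ((WithLp.equiv 2 (Fin n → ℝ)).symm y)
      = x ⬝ᵥ y := by
  simp [PiLp.inner_apply, dotProduct, RCLike.inner_apply, mul_comm]

lemma norm_sq (x : Fin n → ℝ) :
    ‖(WithLp.equiv 2 (Fin n → ℝ)).symm x‖ ^ 2 = x ⬝ᵥ x := by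
  rw [← real_inner_self_eq_norm_sq]
  exact inner_eq x x

lemma clm_apply (M : Matrix (Fin n) (Fin n) ℝ) (x : Fin n → ℝ) :
    Matrix.toEuclideanCLM (𝕜 := ℝ) M ((WithLp.equiv 2 (Fin n → ℝ)).symm x)
      = (WithLp.equiv 2 (Fin n → ℝ)).symm (M *ᵥ x) := by
  simp [toLin'_apply]

lemma kernel (m : ℕ) (B : Matrix (Fin m) (Fin (m+1)) ℝ) :
    ∃ y : Fin (m+1) → ℝ, y ≠ 0 ∧ B *ᵥ y = 0 := by
  by_contra h
  push_neg at h
  have hinj : Function.Injective B.mulVecLin := by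
    rw [← LinearMap.ker_eq_bot, LinearMap.ker_eq_bot']
    intro y hy
    by_contra hy0
    exact (h y hy0) hy
  have := LinearMap.finrank_le_finrank_of_injective hinj
  simp [Module.finrank_pi] at this

lemma sum_trunc {m : ℕ} (hm1 : m + 1 ≤ n) (y' : Fin (m+1) → ℝ) (f : Fin n → ℝ) :
    (∑ i : Fin n, f i * (if h : (i:ℕ) < m+1 then y' ⟨i, h⟩ else 0))
      = ∑ q : Fin (m+1), f (q.castLE hm1) * y' q := by
  set G : ℕ → ℝ := fun k => if h2 : k < m+1 then f (Fin.castLE hm1 ⟨k, h2⟩) * y' ⟨k, h2⟩ else 0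
    with hG
  have h1 : ∀ i : Fin n, f i * (if h : (i:ℕ) < m+1 then y' ⟨i, h⟩ else 0) = G i := by
    intro i
    by_cases h : (i:ℕ) < m+1
    · have : Fin.castLE hm1 ⟨(i:ℕ), h⟩ = i := by ext; rfl
      simp only [hG, dif_pos h, this]
    · simp only [hG, dif_neg h, mul_zero]
  calc (∑ i : Fin n, f i * (if h : (i:ℕ) < m+1 then y' ⟨i, h⟩ else 0))
      = ∑ i : Fin n, G i := Finset.sum_congr rfl fun i _ => h1 i
    _ = ∑ k ∈ Finset.range n, G k := Fin.sum_univ_eq_sum_range G n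
    _ = ∑ k ∈ Finset.range (m+1), G k := by
        refine (Finset.sum_subset (Finset.range_subset_range.2 hm1) ?_).symm
        intro k _ hk
        simp only [Finset.mem_range] at hk
        simp only [hG, dif_neg hk]
    _ = ∑ q : Fin (m+1), G q := (Fin.sum_univ_eq_sum_range G (m+1)).symm
    _ = ∑ q : Fin (m+1), f (q.castLE hm1) * y' q := by
        refine Finset.sum_congr rfl fun q _ => ?_
        simp only [hG, q.isLt, dif_pos]

/-- Weyl's inequality (one direction) for the `j`-th eigenvalues. -/
lemma weyl (A Atil U Util : Matrix (Fin n) (Fin n) ℝ)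
    (lam lamtil : Fin n → ℝ) (j : Fin n)
    (hU : Uᵀ * U = 1) (hUtil : Utilᵀ * Util = 1)
    (hdiagA : A = U * Matrix.diagonal lam * Uᵀ)
    (hdiagAtil : Atil = Util * Matrix.diagonal lamtil * Utilᵀ)
    (hmono : ∀ i i' : Fin n, i ≤ i' → lam i' ≤ lam i)
    (hmonotil : ∀ i i' : Fin n, i ≤ i' → lamtil i' ≤ lamtil i) :
    lamtil j - lam j
      ≤ ‖Matrix.toEuclideanCLM (𝕜 := ℝ) Atil - Matrix.toEuclideanCLM (𝕜 := ℝ) A‖ := by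
  set f := Matrix.toEuclideanCLM (𝕜 := ℝ) Atil - Matrix.toEuclideanCLM (𝕜 := ℝ) A with hf
  set e := (WithLp.equiv 2 (Fin n → ℝ)).symm with he
  have hUo2 : U * Uᵀ = 1 := mul_eq_one_comm.mp hU
  have hUtilo2 : Util * Utilᵀ = 1 := mul_eq_one_comm.mp hUtil
  have hUt : (Uᵀ)ᵀ * Uᵀ = 1 := by rw [transpose_transpose]; exact hUo2
  set m := (j : ℕ) with hm
  have hm1 : m + 1 ≤ n := j.isLt
  set B : Matrix (Fin m) (Fin (m+1)) ℝ :=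
    Matrix.of (fun p q => (Uᵀ * Util) (p.castLE (le_trans (Nat.le_succ m) hm1))
      (q.castLE hm1)) with hB
  obtain ⟨y', hy'0, hBy'⟩ := kernel m B
  set y : Fin n → ℝ := fun i => if h : (i:ℕ) < m+1 then y' ⟨i, h⟩ else 0 with hy
  -- y is nonzero
  have hyne : y ≠ 0 := by
    obtain ⟨q, hq⟩ := Function.ne_iff.mp hy'0
    intro h0
    apply hq
    have : y (q.castLE hm1) = y' q := by
      exact dif_pos (show ((q.castLE hm1 : Fin n) : ℕ) < m+1 from q.isLt)
    rw [h0] at this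
    simpa using this.symm
  have hyhigh : ∀ i : Fin n, ¬ ((i:ℕ) < m+1) → y i = 0 := fun i h => dif_neg h
  set x0 : Fin n → ℝ := Util *ᵥ y with hx0
  set z : Fin n → ℝ := Uᵀ *ᵥ x0 with hz
  -- z vanishes below j
  have hzlow : ∀ p : Fin n, p < j → z p = 0 := by
    intro p hp
    have hpm : (p:ℕ) < m := hp
    have hcast : (Fin.castLE (le_trans (Nat.le_succ m) hm1) ⟨(p:ℕ), hpm⟩) = p := by
      ext; rfl
    have hzp : z p = ∑ i : Fin n, (Uᵀ * Util) p i * y i := by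
      rw [hz, hx0, mulVec_mulVec]
      rfl
    rw [hzp]
    have := sum_trunc hm1 y' (fun i => (Uᵀ * Util) p i)
    rw [hy]
    rw [this]
    have : ∀ q : Fin (m+1), (Uᵀ * Util) p (q.castLE hm1) * y' q
        = B ⟨(p:ℕ), hpm⟩ q * y' q := by
      intro q
      rw [hB]
      simp [hcast]
    rw [Finset.sum_congr rfl fun q _ => this q]
    have := congrFun hBy' ⟨(p:ℕ), hpm⟩
    simpa [mulVec, dotProduct] using this
  have hUz : U *ᵥ z = x0 := by rw [hz, mulVec_mulVec, hUo2, one_mulVec]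
  have hyy : x0 ⬝ᵥ x0 = y ⬝ᵥ y := orth Util hUtil y y
  have hzz : z ⬝ᵥ z = y ⬝ᵥ y := by
    rw [hz]; rw [orth Uᵀ hUt x0 x0]; exact hyy
  have hypos : 0 < y ⬝ᵥ y := by
    obtain ⟨i0, hi0⟩ := Function.ne_iff.mp hyne
    refine Finset.sum_pos' (fun i _ => mul_self_nonneg (y i)) ⟨i0, Finset.mem_univ i0, ?_⟩
    exact mul_self_pos.mpr hi0
  -- quadratic form identities
  have hqAtil : x0 ⬝ᵥ (Atil *ᵥ x0) = y ⬝ᵥ (diagonal lamtil *ᵥ y) := by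
    have h1 : Atil *ᵥ x0 = Util *ᵥ (diagonal lamtil *ᵥ y) := by
      have hmm : Util * diagonal lamtil * Utilᵀ * Util = Util * diagonal lamtil := by
        rw [Matrix.mul_assoc, hUtil, Matrix.mul_one]
      rw [hdiagAtil, hx0, mulVec_mulVec, mulVec_mulVec, hmm]
    rw [h1, hx0, orth Util hUtil]
  have hqA : x0 ⬝ᵥ (A *ᵥ x0) = z ⬝ᵥ (diagonal lam *ᵥ z) := by
    have h1 : A *ᵥ x0 = U *ᵥ (diagonal lam *ᵥ z) := by
      rw [hdiagA, ← mulVec_mulVec, ← mulVec_mulVec, ← hz]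
    rw [h1, ← hUz, orth U hU]
  -- eigenvalue bounds on the quadratic forms
  have hlowtil : lamtil j * (y ⬝ᵥ y) ≤ y ⬝ᵥ (diagonal lamtil *ᵥ y) := by
    have : ∀ i : Fin n, lamtil j * (y i * y i) ≤ y i * ((diagonal lamtil *ᵥ y) i) := by
      intro i
      rw [mulVec_diagonal]
      by_cases hyi : y i = 0
      · simp [hyi]
      · have hilt : (i:ℕ) < m + 1 := by by_contra h; exact hyi (hyhigh i h)
        have hij : i ≤ j := by
          have : (i:ℕ) ≤ m := Nat.lt_succ_iff.mp hilt
          exact this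
        have := hmonotil i j hij
        nlinarith [mul_self_nonneg (y i)]
    calc lamtil j * (y ⬝ᵥ y) = ∑ i : Fin n, lamtil j * (y i * y i) := by
          rw [dotProduct, Finset.mul_sum]
      _ ≤ ∑ i : Fin n, y i * ((diagonal lamtil *ᵥ y) i) :=
          Finset.sum_le_sum fun i _ => this i
      _ = y ⬝ᵥ (diagonal lamtil *ᵥ y) := rfl
  have hhigh : z ⬝ᵥ (diagonal lam *ᵥ z) ≤ lam j * (z ⬝ᵥ z) := by
    have : ∀ i : Fin n, z i * ((diagonal lam *ᵥ z) i) ≤ lam j * (z i * z i) := by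
      intro i
      rw [mulVec_diagonal]
      by_cases hzi : z i = 0
      · simp [hzi]
      · have hij : j ≤ i := le_of_not_gt fun h => hzi (hzlow i h)
        have := hmono j i hij
        nlinarith [mul_self_nonneg (z i)]
    calc z ⬝ᵥ (diagonal lam *ᵥ z) = ∑ i : Fin n, z i * ((diagonal lam *ᵥ z) i) := rfl
      _ ≤ ∑ i : Fin n, lam j * (z i * z i) := Finset.sum_le_sum fun i _ => this i
      _ = lam j * (z ⬝ᵥ z) := by rw [dotProduct, Finset.mul_sum]
  -- operator norm bound
  have hopbound : x0 ⬝ᵥ ((Atil - A) *ᵥ x0) ≤ ‖f‖ * (y ⬝ᵥ y) := by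
    have happ : f (e x0) = e ((Atil - A) *ᵥ x0) := by
      rw [hf, ContinuousLinearMap.sub_apply, he, clm_apply, clm_apply, sub_mulVec]
      rfl
    calc x0 ⬝ᵥ ((Atil - A) *ᵥ x0) = inner ℝ (e x0) (e ((Atil - A) *ᵥ x0)) :=
          (inner_eq _ _).symm
      _ = inner ℝ (e x0) (f (e x0)) := by rw [happ]
      _ ≤ ‖e x0‖ * ‖f (e x0)‖ := real_inner_le_norm _ _
      _ ≤ ‖e x0‖ * (‖f‖ * ‖e x0‖) := by
          exact mul_le_mul_of_nonneg_left (f.le_opNorm _) (norm_nonneg _)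
      _ = ‖f‖ * ‖e x0‖ ^ 2 := by ring
      _ = ‖f‖ * (y ⬝ᵥ y) := by rw [he, norm_sq, hyy]
  -- combine
  have hmain : (lamtil j - lam j) * (y ⬝ᵥ y) ≤ ‖f‖ * (y ⬝ᵥ y) := by
    have h1 : x0 ⬝ᵥ ((Atil - A) *ᵥ x0) = x0 ⬝ᵥ (Atil *ᵥ x0) - x0 ⬝ᵥ (A *ᵥ x0) := by
      rw [sub_mulVec, dotProduct_sub]
    have h2 : lamtil j * (y ⬝ᵥ y) ≤ x0 ⬝ᵥ (Atil *ᵥ x0) := by rw [hqAtil]; exact hlowtil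
    have h3 : x0 ⬝ᵥ (A *ᵥ x0) ≤ lam j * (y ⬝ᵥ y) := by
      rw [hqA, ← hzz] at *; exact hhigh
    nlinarith [hopbound]
  exact le_of_mul_le_mul_right hmain hypos

end DKaux


set_option maxHeartbeats 1000000 in
open DKaux in
/-- Davis–Kahan type eigenvector perturbation bound (Yu–Wang–Samworth, Cor. 1):
`A` and `Ã` are symmetric with eigenvalues `λ` and `λ̃` in decreasing order (as
witnessed by orthogonal diagonalizations); if the eigengap of `A` at index `j`
is at least `g > 0` (i.e. `λ_i − λ_j ≥ g` for `i < j` and `λ_j − λ_i ≥ g` for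
`i > j`) then there are unit eigenvectors `v` of `A` for `λ_j` and `ṽ` of `Ã`
for `λ̃_j` with `‖v − ṽ‖ ≤ 2^{3/2} ‖A − Ã‖_op / g`. -/
theorem eigenvector_perturbation
    {n : ℕ} (A Atil U Util : Matrix (Fin n) (Fin n) ℝ)
    (lam lamtil : Fin n → ℝ) (j : Fin n) (g : ℝ)
    (hA : A.IsSymm) (hAtil : Atil.IsSymm)
    (hU : Uᵀ * U = 1) (hUtil : Utilᵀ * Util = 1)
    (hdiagA : A = U * Matrix.diagonal lam * Uᵀ)
    (hdiagAtil : Atil = Util * Matrix.diagonal lamtil * Utilᵀ)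
    (hmono : ∀ i i' : Fin n, i ≤ i' → lam i' ≤ lam i)
    (hmonotil : ∀ i i' : Fin n, i ≤ i' → lamtil i' ≤ lamtil i)
    (hg : 0 < g)
    (hgap₁ : ∀ i : Fin n, i < j → g ≤ lam i - lam j)
    (hgap₂ : ∀ i : Fin n, j < i → g ≤ lam j - lam i) :
    ∃ v vtil : EuclideanSpace ℝ (Fin n),
      ‖v‖ = 1 ∧ ‖vtil‖ = 1 ∧
      Matrix.toEuclideanCLM (𝕜 := ℝ) A v = lam j • v ∧
      Matrix.toEuclideanCLM (𝕜 := ℝ) Atil vtil = lamtil j • vtil ∧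
      ‖v - vtil‖
        ≤ 2 ^ ((3 : ℝ) / 2)
            * ‖Matrix.toEuclideanCLM (𝕜 := ℝ) A
                - Matrix.toEuclideanCLM (𝕜 := ℝ) Atil‖ / g := by
  set e := (WithLp.equiv 2 (Fin n → ℝ)).symm with he
  set ε := ‖Matrix.toEuclideanCLM (𝕜 := ℝ) A - Matrix.toEuclideanCLM (𝕜 := ℝ) Atil‖ with hε
  have hεnn : 0 ≤ ε := norm_nonneg _
  have hUo2 : U * Uᵀ = 1 := mul_eq_one_comm.mp hU
  have hUt : (Uᵀ)ᵀ * Uᵀ = 1 := by rw [transpose_transpose]; exact hUo2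
  -- Weyl bounds
  have hW1 : lamtil j - lam j ≤ ε := by
    have := weyl A Atil U Util lam lamtil j hU hUtil hdiagA hdiagAtil hmono hmonotil
    rwa [norm_sub_rev] at this
  have hW2 : lam j - lamtil j ≤ ε :=
    weyl Atil A Util U lamtil lam j hUtil hU hdiagAtil hdiagA hmonotil hmono
  -- eigenvectors: columns of U and Util
  set u : Fin n → ℝ := U *ᵥ Pi.single j 1 with hu
  set w : Fin n → ℝ := Util *ᵥ Pi.single j 1 with hw
  have hsing : (Pi.single j 1 : Fin n → ℝ) ⬝ᵥ Pi.single j 1 = 1 := by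
    simp [dotProduct, Pi.single_apply]
  have huu : u ⬝ᵥ u = 1 := by rw [hu, orth U hU]; exact hsing
  have hww : w ⬝ᵥ w = 1 := by rw [hw, orth Util hUtil]; exact hsing
  have heigu : A *ᵥ u = lam j • u := by
    have h1 : Uᵀ *ᵥ u = Pi.single j 1 := by
      rw [hu, mulVec_mulVec, hU, one_mulVec]
    have hds : (diagonal lam) *ᵥ (Pi.single j 1 : Fin n → ℝ)
        = lam j • (Pi.single j 1 : Fin n → ℝ) := by
      funext i; by_cases h : i = j <;> simp [mulVec_diagonal, Pi.single_apply, h]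
    rw [hdiagA, ← mulVec_mulVec, ← mulVec_mulVec, h1, hds, mulVec_smul, hu]
  have heigw : Atil *ᵥ w = lamtil j • w := by
    have h1 : Utilᵀ *ᵥ w = Pi.single j 1 := by
      rw [hw, mulVec_mulVec, hUtil, one_mulVec]
    have hds : (diagonal lamtil) *ᵥ (Pi.single j 1 : Fin n → ℝ)
        = lamtil j • (Pi.single j 1 : Fin n → ℝ) := by
      funext i; by_cases h : i = j <;> simp [mulVec_diagonal, Pi.single_apply, h]
    rw [hdiagAtil, ← mulVec_mulVec, ← mulVec_mulVec, h1, hds, mulVec_smul, hw]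
  -- coordinates of w in the eigenbasis of A
  set c : Fin n → ℝ := Uᵀ *ᵥ w with hc
  have hParse : c ⬝ᵥ c = 1 := by rw [hc, orth Uᵀ hUt]; exact hww
  have hucol : u = fun k => U k j := by rw [hu]; simp [mulVec_single]; rfl
  have hcj : c j = u ⬝ᵥ w := by
    rw [hc, hucol]
    simp [mulVec, dotProduct, transpose_apply]
  -- the residual vector
  set r : Fin n → ℝ := A *ᵥ w - lamtil j • w with hr
  have hr2 : r = (A - Atil) *ᵥ w := by rw [hr, sub_mulVec, heigw]
  have hUA : Uᵀ * A = diagonal lam * Uᵀ := by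
    rw [hdiagA, ← Matrix.mul_assoc, ← Matrix.mul_assoc, hU, Matrix.one_mul]
  have hUr : Uᵀ *ᵥ r = fun i => (lam i - lamtil j) * c i := by
    rw [hr, mulVec_sub, mulVec_smul, mulVec_mulVec, hUA, ← mulVec_mulVec, ← hc]
    funext i
    simp [mulVec_diagonal]
    ring
  have hsumsq : ∑ i : Fin n, ((lam i - lamtil j) * c i) * ((lam i - lamtil j) * c i)
      = r ⬝ᵥ r := by
    have := orth Uᵀ hUt r r
    rw [hUr] at this
    exact this
  have hrr : r ⬝ᵥ r ≤ ε * ε := by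
    have happ : (Matrix.toEuclideanCLM (𝕜 := ℝ) A - Matrix.toEuclideanCLM (𝕜 := ℝ) Atil) (e w)
        = e r := by
      rw [ContinuousLinearMap.sub_apply, he, clm_apply, clm_apply, hr2, sub_mulVec]
      rfl
    have hnw : ‖e w‖ = 1 := by
      have h1 : ‖e w‖ ^ 2 = 1 := by rw [he, norm_sq]; exact hww
      rw [← Real.sqrt_one, ← h1, Real.sqrt_sq (norm_nonneg _)]
    have h2 : ‖e r‖ ≤ ε := by
      rw [← happ]
      calc ‖(Matrix.toEuclideanCLM (𝕜 := ℝ) A - Matrix.toEuclideanCLM (𝕜 := ℝ) Atil) (e w)‖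
          ≤ ε * ‖e w‖ := ContinuousLinearMap.le_opNorm _ _
        _ = ε := by rw [hnw, mul_one]
    have h3 : r ⬝ᵥ r = ‖e r‖ ^ 2 := by rw [he, norm_sq]
    rw [h3]
    nlinarith [norm_nonneg (e r)]
  have hcj1 : c j * c j ≤ 1 := by
    rw [← hParse]
    exact Finset.single_le_sum (fun i _ => mul_self_nonneg (c i)) (Finset.mem_univ j)
  -- the sign
  set s : ℝ := if 0 ≤ c j then 1 else -1 with hs
  have hs2 : s * s = 1 := by rw [hs]; by_cases h : 0 ≤ c j <;> simp [h]
  have hsc : s * c j = |c j| := by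
    rw [hs]; by_cases h : 0 ≤ c j
    · simp [h, abs_of_nonneg h]
    · push_neg at h
      rw [if_neg (not_le.mpr h), abs_of_neg h]
      ring
  set v0 : Fin n → ℝ := s • u with hv0
  have hv0v0 : v0 ⬝ᵥ v0 = 1 := by
    rw [hv0, smul_dotProduct, dotProduct_smul, huu, smul_eq_mul, smul_eq_mul, mul_one, hs2]
  have heigv0 : A *ᵥ v0 = lam j • v0 := by
    rw [hv0, mulVec_smul, heigu, smul_comm]
  have hv0w : v0 ⬝ᵥ w = |c j| := by
    rw [hv0, smul_dotProduct, ← hcj, smul_eq_mul, hsc]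
  have hdiff : (v0 - w) ⬝ᵥ (v0 - w) = 2 - 2 * |c j| := by
    have h1 : w ⬝ᵥ v0 = |c j| := by rw [dotProduct_comm]; exact hv0w
    rw [sub_dotProduct, dotProduct_sub, dotProduct_sub, hv0v0, hww, hv0w, h1]
    ring
  -- key scalar inequality
  have hkey : 2 - 2 * |c j| ≤ 8 * (ε * ε) / (g * g) := by
    by_cases hcase : g ≤ 2 * ε
    · rw [le_div_iff₀ (by positivity : (0:ℝ) < g * g)]
      have hgg : g * g ≤ 4 * (ε * ε) := by nlinarith
      nlinarith [mul_nonneg (abs_nonneg (c j)) (by positivity : (0:ℝ) ≤ g * g), hgg]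
    · push_neg at hcase
      have hterm : ∀ i : Fin n, i ≠ j →
          (g - ε) * (g - ε) * (c i * c i)
            ≤ ((lam i - lamtil j) * c i) * ((lam i - lamtil j) * c i) := by
        intro i hij
        rcases lt_or_gt_of_ne hij with h | h
        · have hgap := hgap₁ i h
          have h' : (g - ε) * (g - ε) ≤ (lam i - lamtil j) * (lam i - lamtil j) := by
            nlinarith [mul_nonneg (by linarith : (0:ℝ) ≤ (lam i - lamtil j) - (g - ε))
              (by linarith : (0:ℝ) ≤ (lam i - lamtil j) + (g - ε))]
          calc (g - ε) * (g - ε) * (c i * c i)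
              ≤ ((lam i - lamtil j) * (lam i - lamtil j)) * (c i * c i) :=
                mul_le_mul_of_nonneg_right h' (mul_self_nonneg _)
            _ = ((lam i - lamtil j) * c i) * ((lam i - lamtil j) * c i) := by ring
        · have hgap := hgap₂ i h
          have h' : (g - ε) * (g - ε) ≤ (lam i - lamtil j) * (lam i - lamtil j) := by
            nlinarith [mul_nonneg (by linarith : (0:ℝ) ≤ -(lam i - lamtil j) - (g - ε))
              (by linarith : (0:ℝ) ≤ -(lam i - lamtil j) + (g - ε))]
          calc (g - ε) * (g - ε) * (c i * c i)
              ≤ ((lam i - lamtil j) * (lam i - lamtil j)) * (c i * c i) :=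
                mul_le_mul_of_nonneg_right h' (mul_self_nonneg _)
            _ = ((lam i - lamtil j) * c i) * ((lam i - lamtil j) * c i) := by ring
      have hsum2 : (g - ε) * (g - ε) * (1 - c j * c j) ≤ ε * ε := by
        have he1 : ∑ i ∈ Finset.univ.erase j, c i * c i = 1 - c j * c j := by
          have h5 := Finset.sum_erase_add Finset.univ (fun i => c i * c i) (Finset.mem_univ j)
          have h0 : (∑ i : Fin n, c i * c i) = 1 := hParse
          simp only [h0] at h5
          linarith [h5]
        calc (g - ε) * (g - ε) * (1 - c j * c j)
            = ∑ i ∈ Finset.univ.erase j, (g - ε) * (g - ε) * (c i * c i) := by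
              rw [← Finset.mul_sum, he1]
          _ ≤ ∑ i ∈ Finset.univ.erase j,
                ((lam i - lamtil j) * c i) * ((lam i - lamtil j) * c i) :=
              Finset.sum_le_sum fun i hi => hterm i (Finset.ne_of_mem_erase hi)
          _ ≤ ∑ i : Fin n, ((lam i - lamtil j) * c i) * ((lam i - lamtil j) * c i) :=
              Finset.sum_le_sum_of_subset_of_nonneg (Finset.erase_subset j Finset.univ)
                (fun i _ _ => mul_self_nonneg _)
          _ = r ⬝ᵥ r := hsumsq
          _ ≤ ε * ε := hrr
      have hcabs : |c j| ≤ 1 := by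
        nlinarith [abs_mul_abs_self (c j), abs_nonneg (c j)]
      have h1 : 1 - |c j| ≤ 1 - c j * c j := by
        nlinarith [abs_mul_abs_self (c j), abs_nonneg (c j)]
      have h3 : (0:ℝ) ≤ 1 - c j * c j := by nlinarith
      have h4 : g * g * (1 - c j * c j) ≤ 4 * (ε * ε) := by
        nlinarith [hsum2, mul_nonneg (mul_nonneg (by linarith : (0:ℝ) ≤ g - 2*ε)
          (by linarith : (0:ℝ) ≤ 3*g - 2*ε)) h3]
      rw [le_div_iff₀ (by positivity : (0:ℝ) < g * g)]
      nlinarith [mul_le_mul_of_nonneg_right h1 (by positivity : (0:ℝ) ≤ g * g), h4]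
  -- assemble
  refine ⟨e v0, e w, ?_, ?_, ?_, ?_, ?_⟩
  · have h1 : ‖e v0‖ ^ 2 = 1 := by rw [he, norm_sq]; exact hv0v0
    rw [← Real.sqrt_one, ← h1, Real.sqrt_sq (norm_nonneg _)]
  · have h1 : ‖e w‖ ^ 2 = 1 := by rw [he, norm_sq]; exact hww
    rw [← Real.sqrt_one, ← h1, Real.sqrt_sq (norm_nonneg _)]
  · rw [he, clm_apply, heigv0]; rfl
  · rw [he, clm_apply, heigw]; rfl
  · have hsub : e v0 - e w = e (v0 - w) := rfl
    set R : ℝ := 2 ^ ((3:ℝ)/2) * ε / g with hR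
    have hRnn : 0 ≤ R := by
      rw [hR]
      positivity
    have h8 : (2:ℝ) ^ ((3:ℝ)/2) * (2:ℝ) ^ ((3:ℝ)/2) = 8 := by
      rw [← Real.rpow_add (by norm_num : (0:ℝ) < 2)]
      rw [show (3:ℝ)/2 + 3/2 = ((3:ℕ):ℝ) by norm_num, Real.rpow_natCast]
      norm_num
    have hR2 : R * R = 8 * (ε * ε) / (g * g) := by
      rw [hR]
      field_simp
      nlinarith [h8]
    have hsq : ‖e (v0 - w)‖ ^ 2 ≤ R ^ 2 := by
      rw [he, norm_sq, hdiff, sq, hR2]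
      exact hkey
    calc ‖e v0 - e w‖ = ‖e (v0 - w)‖ := by rw [hsub]
      _ ≤ R := by
          rw [← Real.sqrt_sq (norm_nonneg (e (v0 - w))), ← Real.sqrt_sq hRnn]
          exact Real.sqrt_le_sqrt hsq
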